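/- Let f be a tropical polynomial in n variables. A point x ∈ ℝⁿ lies in Trop(f) if and only if the linear functional φ_x attains its minimum over the Newton polyhedron N(f) at at least two distinct points of N(f). -/

import Mathlib

open Finset

/-- A tropical polynomial in `n` variables: `k ≥ 1` monomials with exponent
vectors `a i : Fin n → ℕ` and coefficients `c i : ℝ`, the pairs `(a i, c i)`
being pairwise distinct. -/
structure TropPoly (n : ℕ) where
  k : ℕ
  hk : 0 < k
  a : Fin k → Fin n → ℕ
  c : Fin k → ℝ
  distinct : Function.Injective (fun i => (a i, c i))

namespace TropPoly

variable {n : ℕ}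

/-- Value of the `i`-th tropical monomial at `x`: `⟨a i, x⟩ + c i`. -/
def mono (f : TropPoly n) (i : Fin f.k) (x : Fin n → ℝ) : ℝ :=
  (∑ j, (f.a i j : ℝ) * x j) + f.c i

/-- Value of the tropical polynomial: `f(x) = min_i (⟨a i, x⟩ + c i)`. -/
def eval (f : TropPoly n) (x : Fin n → ℝ) : ℝ :=
  Finset.univ.inf' ⟨⟨0, f.hk⟩, Finset.mem_univ _⟩ (fun i => f.mono i x)

/-- The tropical hypersurface `Trop(f)`: points where the minimum is attained
at least at two distinct monomials. -/
def tropSet (f : TropPoly n) : Set (Fin n → ℝ) :=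
  {x | ∃ i j : Fin f.k, i ≠ j ∧ f.mono i x = f.eval x ∧ f.mono j x = f.eval x}

/-- The Newton polyhedron `N(f) ⊆ ℝ^{n+1}`: the convex hull of the union of
the vertical rays `{(a i, c) : c ≥ c i}`. -/
def newton (f : TropPoly n) : Set ((Fin n → ℝ) × ℝ) :=
  convexHull ℝ {p | ∃ i : Fin f.k, p.1 = (fun j => (f.a i j : ℝ)) ∧ f.c i ≤ p.2}

end TropPoly

/-- The linear functional `φ_x(z, a) = ⟨x, z⟩ + a` on `ℝ^{n+1}`. -/
def phi {n : ℕ} (x : Fin n → ℝ) (p : (Fin n → ℝ) × ℝ) : ℝ :=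
  (∑ j, x j * p.1 j) + p.2

/-- The convex cone generated by a set `S`: all nonnegative linear
combinations of elements of `S`. -/
def coneGen {E : Type*} [AddCommMonoid E] [Module ℝ E] (S : Set E) : Set E :=
  {y | ∃ (m : ℕ) (t : Fin m → ℝ) (p : Fin m → E),
    (∀ i, 0 ≤ t i) ∧ (∀ i, p i ∈ S) ∧ y = ∑ i, t i • p i}

namespace TropAux

variable {n : ℕ}

/-- `phi x` is linear. -/
lemma phi_isLinear (x : Fin n → ℝ) : IsLinearMap ℝ (phi x) := by
  constructor
  · intro p q
    simp [phi, mul_add, Finset.sum_add_distrib]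
    ring
  · intro c p
    simp only [phi, Prod.smul_fst, Prod.smul_snd, Pi.smul_apply, smul_eq_mul,
      Finset.mul_sum, mul_add]
    congr 1
    exact Finset.sum_congr rfl (fun j _ => by ring)

def vert (f : TropPoly n) (i : Fin f.k) : (Fin n → ℝ) × ℝ :=
  ((fun j => (f.a i j : ℝ)), f.c i)

lemma vert_mem_gen (f : TropPoly n) (i : Fin f.k) :
    vert f i ∈ {p : (Fin n → ℝ) × ℝ | ∃ i : Fin f.k,
      p.1 = (fun j => (f.a i j : ℝ)) ∧ f.c i ≤ p.2} :=
  ⟨i, rfl, le_refl _⟩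

lemma vert_mem_newton (f : TropPoly n) (i : Fin f.k) : vert f i ∈ f.newton :=
  subset_convexHull ℝ _ (vert_mem_gen f i)

lemma phi_vert (f : TropPoly n) (x : Fin n → ℝ) (i : Fin f.k) :
    phi x (vert f i) = f.mono i x := by
  simp only [phi, vert, TropPoly.mono]
  congr 1
  exact Finset.sum_congr rfl (fun j _ => mul_comm _ _)

lemma vert_injective (f : TropPoly n) : Function.Injective (vert f) := by
  intro i j h
  apply f.distinct
  simp only [vert, Prod.mk.injEq] at h
  obtain ⟨h1, h2⟩ := h
  have : f.a i = f.a j := by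
    funext m
    exact_mod_cast congrFun h1 m
  simp [this, h2]

lemma eval_le_mono (f : TropPoly n) (x : Fin n → ℝ) (i : Fin f.k) :
    f.eval x ≤ f.mono i x :=
  Finset.inf'_le _ (Finset.mem_univ i)

lemma eval_le_phi_gen (f : TropPoly n) (x : Fin n → ℝ)
    (p : (Fin n → ℝ) × ℝ)
    (hp : ∃ i : Fin f.k, p.1 = (fun j => (f.a i j : ℝ)) ∧ f.c i ≤ p.2) :
    f.eval x ≤ phi x p := by
  obtain ⟨i, h1, h2⟩ := hp
  have : phi x (vert f i) ≤ phi x p := by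
    simp only [phi, vert, h1]
    exact (add_le_add_iff_left _).2 h2
  calc f.eval x ≤ f.mono i x := eval_le_mono f x i
    _ = phi x (vert f i) := (phi_vert f x i).symm
    _ ≤ phi x p := this

lemma eval_le_phi (f : TropPoly n) (x : Fin n → ℝ)
    (r : (Fin n → ℝ) × ℝ) (hr : r ∈ f.newton) : f.eval x ≤ phi x r := by
  have hc : Convex ℝ {p : (Fin n → ℝ) × ℝ | f.eval x ≤ phi x p} :=
    convex_halfSpace_ge (phi_isLinear x) _
  have := convexHull_min (fun p hp => eval_le_phi_gen f x p hp) hc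
  exact this hr

/-- If the minimum is attained only at `i0`, then the only point of the
generator set with `phi x` value `f.eval x` is `vert f i0`. -/
lemma gen_eq_of_phi_eq (f : TropPoly n) (x : Fin n → ℝ) (i0 : Fin f.k)
    (hU : ∀ i, f.mono i x = f.eval x → i = i0)
    (p : (Fin n → ℝ) × ℝ)
    (hp : ∃ i : Fin f.k, p.1 = (fun j => (f.a i j : ℝ)) ∧ f.c i ≤ p.2)
    (hphi : phi x p = f.eval x) : p = vert f i0 := by
  obtain ⟨i, h1, h2⟩ := hp
  have hmono : phi x p = f.mono i x + (p.2 - f.c i) := by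
    simp only [phi, h1, TropPoly.mono]
    have : (∑ j, x j * (f.a i j : ℝ)) = ∑ j, (f.a i j : ℝ) * x j :=
      Finset.sum_congr rfl (fun j _ => mul_comm _ _)
    rw [this]; ring
  have hle : f.eval x ≤ f.mono i x := eval_le_mono f x i
  have h2' : p.2 = f.c i := by linarith
  have hmi : f.mono i x = f.eval x := by linarith
  have : i = i0 := hU i hmi
  subst this
  exact Prod.ext h1 h2'

/-- Under the uniqueness hypothesis, the only minimizer in the Newton
polyhedron is `vert f i0`. -/
lemma newton_eq_of_phi_eq (f : TropPoly n) (x : Fin n → ℝ) (i0 : Fin f.k)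
    (hU : ∀ i, f.mono i x = f.eval x → i = i0)
    (p : (Fin n → ℝ) × ℝ) (hp : p ∈ f.newton)
    (hphi : phi x p = f.eval x) : p = vert f i0 := by
  rw [TropPoly.newton, _root_.convexHull_eq] at hp
  obtain ⟨ι, t, w, z, hw0, hw1, hzS, hcm⟩ := hp
  have hpeq : p = ∑ i ∈ t, w i • z i := by
    rw [← hcm, Finset.centerMass_eq_of_sum_1 _ _ hw1]
  have hL := phi_isLinear x
  have hphisum : phi x p = ∑ i ∈ t, w i * phi x (z i) := by
    rw [hpeq]
    have := map_sum (IsLinearMap.mk' (phi x) hL) (fun i => w i • z i) t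
    simp only [IsLinearMap.mk'_apply] at this
    rw [this]
    exact Finset.sum_congr rfl (fun i _ => hL.map_smul _ _)
  have hterm : ∀ i ∈ t, 0 ≤ w i * (phi x (z i) - f.eval x) := fun i hi =>
    mul_nonneg (hw0 i hi) (sub_nonneg.2 (eval_le_phi_gen f x _ (hzS i hi)))
  have hsum0 : ∑ i ∈ t, w i * (phi x (z i) - f.eval x) = 0 := by
    have : ∑ i ∈ t, w i * (phi x (z i) - f.eval x)
        = (∑ i ∈ t, w i * phi x (z i)) - (∑ i ∈ t, w i) * f.eval x := by
      rw [Finset.sum_mul, ← Finset.sum_sub_distrib]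
      exact Finset.sum_congr rfl (fun i _ => by ring)
    rw [this, hw1, ← hphisum, hphi]; ring
  have hzero : ∀ i ∈ t, w i * (phi x (z i) - f.eval x) = 0 :=
    (Finset.sum_eq_zero_iff_of_nonneg hterm).1 hsum0
  have hzv : ∀ i ∈ t, w i • z i = w i • vert f i0 := by
    intro i hi
    rcases eq_or_ne (w i) 0 with h0 | h0
    · simp [h0]
    · have : phi x (z i) = f.eval x := by
        have := hzero i hi
        rcases mul_eq_zero.1 this with h | h
        · exact absurd h h0
        · linarith [sub_eq_zero.1 h]
      rw [gen_eq_of_phi_eq f x i0 hU (z i) (hzS i hi) this]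
  have : p = (∑ i ∈ t, w i) • vert f i0 := by
    rw [hpeq, Finset.sum_congr rfl hzv, ← Finset.sum_smul]
  rw [this, hw1, one_smul]

end TropAux

open TropAux in
/-- `x ∈ Trop(f)` iff `φ_x` attains its minimum over `N(f)` at at
least two distinct points of `N(f)`. -/
theorem mem_tropSet_iff_two_minimizers {n : ℕ} (f : TropPoly n) (x : Fin n → ℝ) :
    x ∈ f.tropSet ↔
      ∃ p ∈ f.newton, ∃ q ∈ f.newton, p ≠ q ∧
        (∀ r ∈ f.newton, phi x p ≤ phi x r) ∧
        (∀ r ∈ f.newton, phi x q ≤ phi x r) := by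
  constructor
  · rintro ⟨i, j, hij, hi, hj⟩
    refine ⟨vert f i, vert_mem_newton f i, vert f j, vert_mem_newton f j,
      fun h => hij (vert_injective f h), ?_, ?_⟩
    · intro r hr
      rw [phi_vert, hi]
      exact eval_le_phi f x r hr
    · intro r hr
      rw [phi_vert, hj]
      exact eval_le_phi f x r hr
  · rintro ⟨p, hp, q, hq, hpq, hpmin, hqmin⟩
    by_contra hx
    -- the minimum of the monomials is attained at some index
    obtain ⟨i0, -, hi0⟩ := Finset.exists_mem_eq_inf' (α := ℝ)
      ⟨⟨0, f.hk⟩, Finset.mem_univ _⟩ (fun i => f.mono i x)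
    have hmi0 : f.mono i0 x = f.eval x := hi0.symm
    have hU : ∀ i, f.mono i x = f.eval x → i = i0 := by
      intro i hi
      by_contra hne
      exact hx ⟨i, i0, hne, hi, hmi0⟩
    -- the minimum value of phi over newton is f.eval x
    have hple : phi x p ≤ f.eval x := by
      have := hpmin (vert f i0) (vert_mem_newton f i0)
      rwa [phi_vert, hmi0] at this
    have hpge : f.eval x ≤ phi x p := eval_le_phi f x p hp
    have hpe : phi x p = f.eval x := le_antisymm hple hpge
    have hqle : phi x q ≤ f.eval x := by
      have := hqmin (vert f i0) (vert_mem_newton f i0)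
      rwa [phi_vert, hmi0] at this
    have hqe : phi x q = f.eval x := le_antisymm hqle (eval_le_phi f x q hq)
    have := newton_eq_of_phi_eq f x i0 hU p hp hpe
    have := newton_eq_of_phi_eq f x i0 hU q hq hqe
    apply hpq
    simp_all
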